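/- In a complete Elgot monad, the Bekić identity holds: for g : X → T((Z + Y) + X) and f : Y → T((Z + Y) + X), setting h = [η, g†]* ∘ f : Y → T(Z + Y), one has (Tα ∘ [f, g])† = [η, h†]* ∘ [η ∘ inr, g†], where α : (A + B) + C → A + (B + C) is the coproduct associativity isomorphism and [-,-] denotes copairing along the coproduct Y + X. -/

import Mathlib

set_option linter.unusedSectionVars false
set_option maxHeartbeats 1000000

open CategoryTheory Limits

variable {C : Type*} [Category C] [HasBinaryCoproducts C]

/-- Kleisli extension of a monad. -/
def kl (T : Monad C) {X Y : C} (f : X ⟶ T.obj Y) : T.obj X ⟶ T.obj Y :=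
  T.map f ≫ T.μ.app Y

lemma kl_comp_eta (T : Monad C) {A B : C} (m : A ⟶ B) :
    kl T (m ≫ T.η.app B) = T.map m := by
  simp [kl]

lemma eta_comp_kl (T : Monad C) {A B : C} (k : A ⟶ T.obj B) :
    T.η.app A ≫ kl T k = k := by
  rw [kl, ← Category.assoc, ← T.η.naturality k]
  simp

lemma map_comp_kl (T : Monad C) {A B D : C} (m : A ⟶ B) (k : B ⟶ T.obj D) :
    T.map m ≫ kl T k = kl T (m ≫ k) := by
  simp [kl]

lemma kl_comp_map (T : Monad C) {A B D : C} (k : A ⟶ T.obj B) (m : B ⟶ D) :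
    kl T k ≫ T.map m = kl T (k ≫ T.map m) := by
  rw [kl, kl, Category.assoc, Functor.map_comp, Category.assoc]
  congr 1
  exact (T.μ.naturality m).symm

lemma comp_eta (T : Monad C) {A B : C} (m : A ⟶ B) :
    m ≫ T.η.app B = T.η.app A ≫ T.map m := by
  simpa using T.η.naturality m

lemma comp_eta_assoc (T : Monad C) {A B D : C} (m : A ⟶ B) (k : T.obj B ⟶ D) :
    m ≫ T.η.app B ≫ k = T.η.app A ≫ T.map m ≫ k := by
  rw [← Category.assoc, comp_eta, Category.assoc]

/-- In a complete Elgot monad, the Bekić identity holds. -/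
theorem bekic_of_elgot (T : Monad C)
    (iter : ∀ {X Y : C}, (X ⟶ T.obj (Y ⨿ X)) → (X ⟶ T.obj Y))
    (unfolding : ∀ {X Y : C} (f : X ⟶ T.obj (Y ⨿ X)),
      f ≫ kl T (coprod.desc (T.η.app Y) (iter f)) = iter f)
    (naturality : ∀ {X Y Z : C} (f : X ⟶ T.obj (Y ⨿ X)) (g : Y ⟶ T.obj Z),
      iter f ≫ kl T g =
        iter (f ≫ kl T (coprod.desc (g ≫ T.map coprod.inl) (coprod.inr ≫ T.η.app (Z ⨿ X)))))
    (dinaturality : ∀ {X Y Z : C} (g : X ⟶ T.obj (Y ⨿ Z)) (h : Z ⟶ T.obj (Y ⨿ X)),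
      iter (g ≫ kl T (coprod.desc (coprod.inl ≫ T.η.app (Y ⨿ X)) h)) =
        g ≫ kl T (coprod.desc (T.η.app Y)
          (iter (h ≫ kl T (coprod.desc (coprod.inl ≫ T.η.app (Y ⨿ Z)) g)))))
    (codiagonal : ∀ {X Y : C} (g : X ⟶ T.obj ((Y ⨿ X) ⨿ X)),
      iter (g ≫ T.map (coprod.desc (𝟙 (Y ⨿ X)) coprod.inr)) = iter (iter g))
    (uniformity : ∀ {X Y Z : C} (f : X ⟶ T.obj (Y ⨿ X)) (g : Z ⟶ T.obj (Y ⨿ Z)) (h : Z ⟶ X),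
      h ≫ f = g ≫ T.map (coprod.map (𝟙 Y) h) → h ≫ iter f = iter g)
    {X Y Z : C} (g : X ⟶ T.obj ((Z ⨿ Y) ⨿ X)) (f : Y ⟶ T.obj ((Z ⨿ Y) ⨿ X)) :
    iter (coprod.desc f g ≫ T.map (coprod.associator Z Y X).hom) =
      coprod.desc (coprod.inr ≫ T.η.app (Z ⨿ Y)) (iter g) ≫
        kl T (coprod.desc (T.η.app Z)
          (iter (f ≫ kl T (coprod.desc (T.η.app (Z ⨿ Y)) (iter g))))) := by
  set δ : (Z ⨿ Y : C) ⟶ Z ⨿ (Y ⨿ X) := coprod.map (𝟙 Z) coprod.inl with hδ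
  set γ : ((Z ⨿ Y : C) ⨿ X) ⟶ (Z ⨿ (Y ⨿ X)) ⨿ (Y ⨿ X) :=
    coprod.desc (δ ≫ coprod.inl) ((coprod.inr : X ⟶ Y ⨿ X) ≫ coprod.inr) with hγ
  set c : ((Y : C) ⨿ X) ⟶ T.obj ((Z ⨿ (Y ⨿ X)) ⨿ (Y ⨿ X)) :=
    coprod.desc f g ≫ T.map γ with hc
  -- Step A: codiagonal input
  have stepA : c ≫ T.map (coprod.desc (𝟙 (Z ⨿ (Y ⨿ X))) coprod.inr)
      = coprod.desc f g ≫ T.map (coprod.associator Z Y X).hom := by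
    rw [hc, Category.assoc, ← Functor.map_comp]
    congr 2
    ext <;> simp [hγ, hδ, coprod.inl_desc, coprod.inr_desc, coprod.inl_desc_assoc, coprod.inr_desc_assoc]
  -- Step C : parametric naturality in δ
  have stepC : iter (g ≫ T.map (coprod.map δ (𝟙 X))) = iter g ≫ T.map δ := by
    have hnat := naturality g (δ ≫ T.η.app (Z ⨿ (Y ⨿ X)))
    rw [kl_comp_eta] at hnat
    rw [hnat]
    have hd : coprod.desc ((δ ≫ T.η.app (Z ⨿ (Y ⨿ X))) ≫ T.map coprod.inl)
        ((coprod.inr : X ⟶ _) ≫ T.η.app ((Z ⨿ (Y ⨿ X)) ⨿ X))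
        = coprod.map δ (𝟙 X) ≫ T.η.app ((Z ⨿ (Y ⨿ X)) ⨿ X) := by
      apply coprod.hom_ext <;> simp [comp_eta, comp_eta_assoc, ← Functor.map_comp, coprod.inl_desc, coprod.inr_desc, coprod.inl_desc_assoc, coprod.inr_desc_assoc]
    rw [hd, kl_comp_eta]
  -- Step B : uniformity
  have hγfact : γ = coprod.map δ (𝟙 X) ≫ coprod.map (𝟙 (Z ⨿ (Y ⨿ X))) coprod.inr := by
    apply coprod.hom_ext <;> simp [hγ]
  have stepB : (coprod.inr : X ⟶ Y ⨿ X) ≫ iter c = iter g ≫ T.map δ := by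
    rw [← stepC]
    apply uniformity
    rw [hc, ← Category.assoc, coprod.inr_desc, hγfact, Functor.map_comp]
    simp only [Category.assoc]
  -- Step D : inl component via unfolding
  have stepD : (coprod.inl : Y ⟶ Y ⨿ X) ≫ iter c
      = (f ≫ kl T (coprod.desc (T.η.app (Z ⨿ Y)) (iter g))) ≫ T.map δ := by
    conv_lhs => rw [← unfolding c]
    rw [hc]
    simp only [← Category.assoc]
    rw [coprod.inl_desc]
    simp only [Category.assoc]
    rw [map_comp_kl]
    have key : γ ≫ coprod.desc (T.η.app (Z ⨿ (Y ⨿ X))) (iter c)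
        = coprod.desc (T.η.app (Z ⨿ Y)) (iter g) ≫ T.map δ := by
      apply coprod.hom_ext
      · simp [hγ, comp_eta, comp_eta_assoc, coprod.inl_desc, coprod.inr_desc, coprod.inl_desc_assoc, coprod.inr_desc_assoc]
      · rw [hγ]
        simp only [← Category.assoc]
        rw [coprod.inr_desc, coprod.inr_desc]
        simp only [Category.assoc]
        rw [coprod.inr_desc]
        exact stepB
    rw [key, ← kl_comp_map]
    rfl
  -- Step E : closed form of iter c
  have stepE : iter c =
      coprod.desc (f ≫ kl T (coprod.desc (T.η.app (Z ⨿ Y)) (iter g))) (iter g) ≫ T.map δ := by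
    apply coprod.hom_ext
    · rw [← Category.assoc, coprod.inl_desc]; exact stepD
    · rw [← Category.assoc, coprod.inr_desc]; exact stepB
  -- Step F : dinaturality
  have din := dinaturality
    (coprod.desc (f ≫ kl T (coprod.desc (T.η.app (Z ⨿ Y)) (iter g))) (iter g))
    ((coprod.inl : Y ⟶ Y ⨿ X) ≫ (coprod.inr : (Y ⨿ X : C) ⟶ Z ⨿ (Y ⨿ X)) ≫
      T.η.app (Z ⨿ (Y ⨿ X)))
  have e0 : coprod.desc ((coprod.inl : Z ⟶ Z ⨿ (Y ⨿ X)) ≫ T.η.app (Z ⨿ (Y ⨿ X)))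
      ((coprod.inl : Y ⟶ Y ⨿ X) ≫ (coprod.inr : (Y ⨿ X : C) ⟶ Z ⨿ (Y ⨿ X)) ≫
        T.η.app (Z ⨿ (Y ⨿ X)))
      = δ ≫ T.η.app (Z ⨿ (Y ⨿ X)) := by
    apply coprod.hom_ext <;> simp [hδ, coprod.inl_desc, coprod.inr_desc, coprod.inl_desc_assoc, coprod.inr_desc_assoc]
  rw [e0, kl_comp_eta, ← stepE] at din
  have e2 : ((coprod.inl : Y ⟶ Y ⨿ X) ≫ (coprod.inr : (Y ⨿ X : C) ⟶ Z ⨿ (Y ⨿ X)) ≫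
        T.η.app (Z ⨿ (Y ⨿ X))) ≫
      kl T (coprod.desc ((coprod.inl : Z ⟶ Z ⨿ Y) ≫ T.η.app (Z ⨿ Y))
        (coprod.desc (f ≫ kl T (coprod.desc (T.η.app (Z ⨿ Y)) (iter g))) (iter g)))
      = f ≫ kl T (coprod.desc (T.η.app (Z ⨿ Y)) (iter g)) := by
    simp only [Category.assoc, eta_comp_kl, coprod.inr_desc, coprod.inl_desc]
  rw [e2] at din
  -- Conclude
  rw [← stepA, codiagonal, din]
  apply coprod.hom_ext
  · rw [← Category.assoc, ← Category.assoc, coprod.inl_desc, coprod.inl_desc]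
    conv_rhs => rw [Category.assoc, eta_comp_kl, coprod.inr_desc]
    exact unfolding _
  · rw [← Category.assoc, ← Category.assoc, coprod.inr_desc, coprod.inr_desc]
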